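/- arXiv:2308.16749 — 2 statements merged into one kernel-verified Lean document; each statement's English description precedes it below -/
import Mathlib

section
/- For all integers 0 ≤ j ≤ k one has Σ_{i=j}^{k} s_{k,i} · t_{i,j} = 1 if j = k and = 0 if j < k; that is, the lower-triangular matrices (s_{k,i}) and (t_{i,j}) are mutually inverse in the other order. -/
open Finset

noncomputable section

/-- The field `F = ℚ(𝔮)` of rational functions over `ℚ` in an indeterminate `𝔮`. -/
abbrev F : Type := RatFunc ℚ

/-- The indeterminate `𝔮`. -/
noncomputable def qv : F := RatFunc.X

/-- `{n} = 𝔮^n - 𝔮^{-n}` for `n : ℤ`. -/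
def brc (n : ℤ) : F := qv ^ n - qv ^ (-n)

/-- `[n] = {n}/{1}`. -/
def brk (n : ℤ) : F := brc n / brc 1

/-- `{n}! = ∏_{j=1}^n {j}`. -/
def brcFac (n : ℕ) : F := ∏ j ∈ Finset.range n, brc ((j : ℤ) + 1)

/-- `[n]! = ∏_{j=1}^n [j]`. -/
def brkFac (n : ℕ) : F := ∏ j ∈ Finset.range n, brk ((j : ℤ) + 1)

/-- `q = 𝔮²`. -/
def qq : F := qv ^ 2

/-- The q-Pochhammer symbol `(x; q)_k = ∏_{j=0}^{k-1} (1 - x q^j)`. -/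
def poch (x : F) (k : ℕ) : F := ∏ j ∈ Finset.range k, (1 - x * qq ^ j)

/-- The q-binomial coefficient `[n choose i]_q`. -/
def qbinom (n i : ℕ) : F := poch qq n / (poch qq i * poch qq (n - i))

/-- `t_{k,i} = {2k+1}! {2i+2} / ({k+i+2}! {k-i}!)` for `0 ≤ i ≤ k`. -/
def tcoef (k i : ℕ) : F :=
  brcFac (2 * k + 1) * brc (2 * (i : ℤ) + 2) / (brcFac (k + i + 2) * brcFac (k - i))

/-- `s_{i,j} = (-1)^{i+j} [i+1+j]! / ([i-j]! [2j+1]!)` for `0 ≤ j ≤ i`. -/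
def scoef (i j : ℕ) : F :=
  (-1) ^ (i + j) * brkFac (i + 1 + j) / (brkFac (i - j) * brkFac (2 * j + 1))

lemma hq : (qv : F) ≠ 0 := RatFunc.X_ne_zero

lemma qnpow_ne_one (m : ℕ) (h : m ≠ 0) : (qv : F) ^ m ≠ 1 := by
  intro he
  have : ((Polynomial.X : Polynomial ℚ) ^ m : Polynomial ℚ) = 1 := by
    apply RatFunc.algebraMap_injective ℚ
    simpa [qv, RatFunc.algebraMap_X] using he
  have := congrArg Polynomial.natDegree this
  simp [Polynomial.natDegree_X_pow] at this
  omega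

lemma qpow_ne_one (m : ℤ) (h : m ≠ 0) : qv ^ m ≠ 1 := by
  rcases lt_trichotomy m 0 with hm | hm | hm
  · intro he
    have h2 : qv ^ (-m) = 1 := by
      have : (qv ^ m)⁻¹ = 1 := by rw [he]; simp
      rwa [← zpow_neg] at this
    have : qv ^ ((-m).toNat) = (1 : F) := by
      rw [← zpow_natCast, Int.toNat_of_nonneg (by omega)]; exact h2
    exact qnpow_ne_one _ (by omega) this
  · omega
  · intro he
    have : qv ^ (m.toNat) = (1 : F) := by
      rw [← zpow_natCast, Int.toNat_of_nonneg (by omega)]; exact he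
    exact qnpow_ne_one _ (by omega) this

lemma brc_ne_zero (n : ℤ) (h : n ≠ 0) : brc n ≠ 0 := by
  intro he
  have h1 : qv ^ n = qv ^ (-n) := sub_eq_zero.mp he
  have h2 : qv ^ (2*n) = 1 := by
    have : qv ^ n * qv ^ n = qv ^ (-n) * qv ^ n := by rw [h1]
    rw [← zpow_add₀ hq, ← zpow_add₀ hq] at this
    simpa [two_mul] using this
  exact qpow_ne_one (2*n) (by omega) h2

lemma brk_ne_zero (n : ℤ) (h : n ≠ 0) : brk n ≠ 0 :=
  div_ne_zero (brc_ne_zero n h) (brc_ne_zero 1 one_ne_zero)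

lemma brc_mul_brc (a b : ℤ) :
    brc a * brc b = qv ^ (a + b) + qv ^ (-(a + b)) - qv ^ (a - b) - qv ^ (b - a) := by
  simp only [brc, sub_mul, mul_sub, ← zpow_add₀ hq]
  have h1 : a + -b = a - b := by ring
  have h2 : -a + b = b - a := by ring
  have h3 : -a + -b = -(a+b) := by ring
  rw [h1, h2, h3]
  ring

lemma brc_key (j d e : ℤ) :
    brc (d+e+1) * brc (2*j+d+e+3) = brc d * brc (2*j+d+2) + brc (e+1) * brc (2*j+2*d+e+3) := by
  rw [brc_mul_brc, brc_mul_brc, brc_mul_brc]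
  rw [show (d+e+1) + (2*j+d+e+3) = 2*j+2*d+2*e+4 from by ring]
  rw [show (d+e+1) - (2*j+d+e+3) = -(2*j+2) from by ring]
  rw [show (2*j+d+e+3) - (d+e+1) = 2*j+2 from by ring]
  rw [show d + (2*j+d+2) = 2*j+2*d+2 from by ring]
  rw [show d - (2*j+d+2) = -(2*j+2) from by ring]
  rw [show (2*j+d+2) - d = 2*j+2 from by ring]
  rw [show (e+1) + (2*j+2*d+e+3) = 2*j+2*d+2*e+4 from by ring]
  rw [show (e+1) - (2*j+2*d+e+3) = -(2*j+2*d+2) from by ring]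
  rw [show (2*j+2*d+e+3) - (e+1) = 2*j+2*d+2 from by ring]
  ring

lemma brk_key (j d e : ℤ) :
    brk (d+e+1) * brk (2*j+d+e+3) = brk d * brk (2*j+d+2) + brk (e+1) * brk (2*j+2*d+e+3) := by
  have h1 := brc_ne_zero 1 one_ne_zero
  simp only [brk, div_mul_div_comm, ← add_div]
  rw [brc_key]

lemma brc_zero : brc 0 = 0 := by simp [brc]
lemma brk_zero : brk 0 = 0 := by simp [brk, brc_zero]

lemma brcFac_succ (n : ℕ) : brcFac (n+1) = brcFac n * brc ((n : ℤ)+1) :=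
  Finset.prod_range_succ _ n

lemma brkFac_succ (n : ℕ) : brkFac (n+1) = brkFac n * brk ((n : ℤ)+1) :=
  Finset.prod_range_succ _ n

lemma brcFac_ne_zero (n : ℕ) : brcFac n ≠ 0 :=
  Finset.prod_ne_zero_iff.mpr fun j _ => brc_ne_zero _ (by omega)

lemma brkFac_ne_zero (n : ℕ) : brkFac n ≠ 0 :=
  Finset.prod_ne_zero_iff.mpr fun j _ => brk_ne_zero _ (by omega)

lemma brc_eq_brk (n : ℤ) : brc n = brk n * brc 1 :=
  (div_mul_cancel₀ _ (brc_ne_zero 1 one_ne_zero)).symm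

lemma brcFac_eq (n : ℕ) : brcFac n = brkFac n * brc 1 ^ n := by
  induction n with
  | zero => simp [brcFac, brkFac]
  | succ m ih => rw [brcFac_succ, brkFac_succ, ih, brc_eq_brk ((m:ℤ)+1)]; ring

/-- The telescoping auxiliary function. -/
def gg (j k i : ℕ) : F :=
  (-1)^(k+i) * brkFac (k+1+i) * brk (2*(j:ℤ)+2) * brk ((i:ℤ)-(j:ℤ)) * brk ((i:ℤ)+(j:ℤ)+2)
    / (brk ((k:ℤ)-(j:ℤ)) * brk ((k:ℤ)+(j:ℤ)+2) * brkFac (k-i) * brkFac (i+j+2) * brkFac (i-j))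

lemma gg_bot (j k : ℕ) : gg j k j = 0 := by
  simp [gg, brk_zero]


lemma abstract {K : Type*} [Field K]
    (s P Q R S T u v c Bd B2 Bde Bk Bd1 B3 Be1 Bkk B0 : K)
    (key : Bde * Bk = Bd * B2 + Be1 * Bkk)
    (hQ : Q ≠ 0) (hR : R ≠ 0) (hS : S ≠ 0) (hT : T ≠ 0) (hu : u ≠ 0) (hv : v ≠ 0) (hc : c ≠ 0)
    (hBde : Bde ≠ 0) (hBk : Bk ≠ 0) (hBd1 : Bd1 ≠ 0) (hB3 : B3 ≠ 0) (hBe1 : Be1 ≠ 0) :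
    1 * 1 * (s * -1) * P / (T * Be1 * Q) *
      (Q * (u * v ^ 2 * c) * (B0 * c) / (R * (u * v * c ^ 2) * (S * v))) =
    1 * 1 * (s * -1) * P * B0 * Bd * B2 / (Bde * Bk * (T * Be1) * R * S) -
      1 * 1 * (s * 1) * (P * Bkk) * B0 * Bd1 * B3 / (Bde * Bk * T * (R * B3) * (S * Bd1)) := by
  have hD1 : Bde * Bk * (T * Be1) * R * S ≠ 0 := by apply_rules [mul_ne_zero]
  have hD2 : Bde * Bk * T * (R * B3) * (S * Bd1) ≠ 0 := by apply_rules [mul_ne_zero]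
  have hDL : T * Be1 * Q * (R * (u * v * c ^ 2) * (S * v)) ≠ 0 := by
    apply_rules [mul_ne_zero, pow_ne_zero]
  rw [div_mul_div_comm, div_sub_div _ _ hD1 hD2, div_eq_div_iff hDL (mul_ne_zero hD1 hD2)]
  linear_combination (-s*P*B0*Q*u*v^2*c^2*Bde*Bk*T^2*Be1*R^2*S^2*B3*Bd1 : K) * key

lemma step (j d e : ℕ) :
    scoef (j+d+e+1) (j+d) * tcoef (j+d) j
      = gg j (j+d+e+1) (j+d) - gg j (j+d+e+1) (j+d+1) := by
  simp only [scoef, tcoef, gg]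
  rw [show j+d+e+1 - (j+d) = e+1 from by omega,
      show j+d+e+1+1+(j+d) = 2*j+2*d+e+2 from by omega,
      show (j+d+e+1)+(j+d) = 2*(j+d)+(e+1) from by omega,
      show (j+d+e+1)+(j+d+1) = 2*(j+d)+(e+2) from by omega,
      show 2*(j+d)+1 = 2*j+2*d+1 from by omega,
      show (j+d)+j+2 = 2*j+d+2 from by omega,
      show (j+d) - j = d from by omega,
      show j+d+e+1+1+(j+d+1) = (2*j+2*d+e+2)+1 from by omega,
      show j+d+e+1-(j+d+1) = e from by omega,
      show (j+d+1)+j+2 = (2*j+d+2)+1 from by omega,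
      show (j+d+1)-j = d+1 from by omega]
  push_cast
  rw [show (↑j+↑d-↑j : ℤ) = ↑d from by ring,
      show (↑j+↑d+↑j+2 : ℤ) = 2*↑j+↑d+2 from by ring,
      show (↑j+↑d+↑e+1-↑j : ℤ) = ↑d+↑e+1 from by ring,
      show (↑j+↑d+↑e+1+↑j+2 : ℤ) = 2*↑j+↑d+↑e+3 from by ring,
      show (↑j+↑d+1-↑j : ℤ) = ↑d+1 from by ring,
      show (↑j+↑d+1+↑j+2 : ℤ) = 2*↑j+↑d+3 from by ring]
  rw [brkFac_succ (2*j+2*d+e+2), brkFac_succ (2*j+d+2), brkFac_succ e, brkFac_succ d]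
  rw [brcFac_eq (2*j+2*d+1), brcFac_eq (2*j+d+2), brcFac_eq d, brc_eq_brk (2*(j:ℤ)+2)]
  push_cast
  simp only [pow_add, pow_mul, neg_one_sq, one_pow, pow_one]
  rw [show (2*(j:ℤ)+(d:ℤ)+2+1 : ℤ) = 2*(j:ℤ)+(d:ℤ)+3 from by ring,
      show (2*(j:ℤ)+2*(d:ℤ)+(e:ℤ)+2+1 : ℤ) = 2*(j:ℤ)+2*(d:ℤ)+(e:ℤ)+3 from by ring]
  have h1 : brc (1:ℤ) ≠ 0 := brc_ne_zero 1 one_ne_zero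
  have h2 : brk ((d:ℤ)+(e:ℤ)+1) ≠ 0 := brk_ne_zero _ (by omega)
  have h3 : brk (2*(j:ℤ)+(d:ℤ)+(e:ℤ)+3) ≠ 0 := brk_ne_zero _ (by omega)
  have h4 : brk ((e:ℤ)+1) ≠ 0 := brk_ne_zero _ (by omega)
  have h5 := brkFac_ne_zero (2*j+2*d+e+2)
  have h6 := brkFac_ne_zero (2*j+2*d+1)
  have h7 := brkFac_ne_zero (2*j+d+2)
  have h8 := brkFac_ne_zero d
  have h9 := brkFac_ne_zero e
  have h10 : brk ((d:ℤ)+1) ≠ 0 := brk_ne_zero _ (by omega)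
  have h11 : brk (2*(j:ℤ)+(d:ℤ)+3) ≠ 0 := brk_ne_zero _ (by omega)
  rw [show ((brc 1 ^2)^d : F) = (brc 1 ^ d)^2 from by rw [← pow_mul, ← pow_mul, Nat.mul_comm]]
  exact abstract _ _ _ _ _ _ _ _ _ _ _ _ _ _ _ _ _ _ (brk_key (j:ℤ) d e) h6 h7 h8 h9
    (pow_ne_zero _ (pow_ne_zero _ h1)) (pow_ne_zero _ h1) h1 h2 h3 h10 h11 h4

lemma brkFac_zero : brkFac 0 = 1 := by simp [brkFac]
lemma brcFac_zero : brcFac 0 = 1 := by simp [brcFac]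

lemma diag (k : ℕ) : scoef k k * tcoef k k = 1 := by
  simp only [scoef, tcoef]
  rw [show k - k = 0 from by omega, show k+1+k = 2*k+1 from by omega,
      show k+k+2 = (2*k+1)+1 from by omega, show k+k = 2*k from by omega,
      brkFac_zero, brcFac_zero, brcFac_succ (2*k+1)]
  push_cast
  rw [pow_mul, neg_one_sq, one_pow]
  have h1 := brkFac_ne_zero (2*k+1)
  have h2 := brcFac_ne_zero (2*k+1)
  have h3 : brc (2*(k:ℤ)+1+1) ≠ 0 := brc_ne_zero _ (by omega)
  have h4 : brc (2*(k:ℤ)+2) ≠ 0 := brc_ne_zero _ (by omega)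
  rw [div_mul_div_comm, div_eq_one_iff_eq (by apply_rules [mul_ne_zero, one_ne_zero])]
  ring

lemma top (j m : ℕ) :
    scoef (j+m+1) (j+m+1) * tcoef (j+m+1) j = gg j (j+m+1) (j+m+1) := by
  simp only [scoef, tcoef, gg]
  rw [show j+m+1 - (j+m+1) = 0 from by omega,
      show j+m+1+1+(j+m+1) = 2*(j+m+1)+1 from by omega,
      show (j+m+1)+(j+m+1) = 2*(j+m+1) from by omega,
      show (j+m+1)+j+2 = 2*j+m+3 from by omega,
      show (j+m+1)-j = m+1 from by omega,
      brkFac_zero]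
  push_cast
  rw [show ((j:ℤ)+(m:ℤ)+1-(j:ℤ) : ℤ) = (m:ℤ)+1 from by ring,
      show ((j:ℤ)+(m:ℤ)+1+(j:ℤ)+2 : ℤ) = 2*(j:ℤ)+(m:ℤ)+3 from by ring]
  rw [pow_mul, neg_one_sq, one_pow]
  rw [brcFac_eq (2*(j+m+1)+1), brcFac_eq (2*j+m+3), brcFac_eq (m+1), brc_eq_brk (2*(j:ℤ)+2)]
  have h1 := brkFac_ne_zero (2*(j+m+1)+1)
  have h2 := brkFac_ne_zero (2*j+m+3)
  have h3 := brkFac_ne_zero (m+1)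
  have h4 : brk ((m:ℤ)+1) ≠ 0 := brk_ne_zero _ (by omega)
  have h5 : brk (2*(j:ℤ)+(m:ℤ)+3) ≠ 0 := brk_ne_zero _ (by omega)
  have h6 : brc (1:ℤ) ≠ 0 := brc_ne_zero 1 one_ne_zero
  rw [div_mul_div_comm, div_eq_div_iff (by apply_rules [mul_ne_zero, pow_ne_zero, one_ne_zero])
    (by apply_rules [mul_ne_zero, pow_ne_zero, one_ne_zero])]
  ring


/-- For `0 ≤ j ≤ k`, `Σ_{i=j}^k s_{k,i} t_{i,j}` is `1` if `j = k` and `0` if `j < k`. -/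
theorem stmt3 (j k : ℕ) (hjk : j ≤ k) :
    ∑ i ∈ Finset.Icc j k, scoef k i * tcoef i j = if j = k then 1 else 0 := by
  rcases eq_or_lt_of_le hjk with heq | hlt
  · subst heq
    rw [if_pos rfl, Finset.Icc_self, Finset.sum_singleton, _root_.diag]
  · rw [if_neg (by omega)]
    obtain ⟨m, rfl⟩ : ∃ m, k = j + m + 1 := ⟨k - j - 1, by omega⟩
    rw [show Finset.Icc j (j+m+1) = Finset.Ico j (j+m+1) ∪ {j+m+1} from by
          ext x; simp [Finset.mem_Icc, Finset.mem_Ico]; omega]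
    rw [Finset.sum_union (by simp)]
    rw [Finset.sum_singleton, top]
    rw [Finset.sum_Ico_eq_sum_range]
    rw [show j+m+1-j = m+1 from by omega]
    have hterm : ∀ d ∈ Finset.range (m+1),
        scoef (j+m+1) (j+d) * tcoef (j+d) j
          = gg j (j+m+1) (j+d) - gg j (j+m+1) (j+d+1) := by
      intro d hd
      have hd' : d ≤ m := by simpa using Nat.lt_succ_iff.mp (Finset.mem_range.mp hd)
      have : j+m+1 = j+d+(m-d)+1 := by omega
      rw [this, step j d (m-d)]
    rw [Finset.sum_congr rfl hterm]
    have htel := Finset.sum_range_sub' (fun d => gg j (j+m+1) (j+d)) (m+1)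
    simp only [← Nat.add_assoc] at htel
    rw [htel]
    simp only [Nat.add_zero, gg_bot]
    ring
end
end

section
/- For every integer k ≥ 0, Σ_{l=0}^{k} q^{l²} (1 − q^{2l+1}) / ((q;q)_{k−l} (q;q)_{k+l+1}) = 1/(q;q)_k² in F; that is, the pair α_l = q^{l²}(1−q^{2l+1})/(1−q), β_k = 1/(q;q)_k² is a Bailey pair relative to x = q. -/
open Finset

noncomputable section

lemma one_sub_qq_pow_ne_zero (n : ℕ) : (1 : F) - qq ^ (n + 1) ≠ 0 := by
  intro h
  have h1 : qq ^ (n + 1) = 1 := (sub_eq_zero.mp h).symm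
  have h2 : (RatFunc.X : F) ^ (2 * (n + 1)) = 1 := by
    simpa [qq, qv, ← pow_mul, mul_comm] using h1
  have h3 : (Polynomial.X : Polynomial ℚ) ^ (2 * (n + 1)) = 1 := by
    apply RatFunc.algebraMap_injective ℚ
    simpa [map_pow, RatFunc.algebraMap_X] using h2
  have h4 := congrArg Polynomial.natDegree h3
  simp [Polynomial.natDegree_X_pow] at h4

lemma poch_succ (n : ℕ) : poch qq (n + 1) = poch qq n * (1 - qq ^ (n + 1)) := by
  rw [poch, Finset.prod_range_succ, ← poch, ← pow_succ']

lemma poch_ne_zero (n : ℕ) : poch qq n ≠ 0 := by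
  induction n with
  | zero => simp [poch]
  | succ n ih =>
    rw [poch_succ]
    exact mul_ne_zero ih (one_sub_qq_pow_ne_zero n)

set_option maxHeartbeats 1000000 in
lemma cert (q x z w Pm Pk : F) (hPm : Pm ≠ 0) (hPk : Pk ≠ 0)
    (hA : (1 : F) - z ≠ 0) (hB : (1 : F) - x * x * z * q ≠ 0)
    (hCn : (1 : F) - x * z ≠ 0) :
    w * (1 - x * x * q) / ((Pm * (1 - z)) * (Pk * (1 - x * x * z * q))) =
      w * (1 - x * x * q) / (Pm * Pk) / (1 - x * z) ^ 2 +
        (-(w * (x * x * z) * (1 - x * q) ^ 2) /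
            (Pm * (Pk * (1 - x * x * z * q)) * (1 - x * z) ^ 2) -
          -(w * z * (1 - x) ^ 2) / ((Pm * (1 - z)) * Pk * (1 - x * z) ^ 2)) := by
  set D : F := Pm * Pk * (1 - z) * (1 - x * x * z * q) * (1 - x * z) ^ 2 with hDdef
  have hC2 : ((1 : F) - x * z) ^ 2 ≠ 0 := pow_ne_zero 2 hCn
  have hD : D ≠ 0 :=
    mul_ne_zero (mul_ne_zero (mul_ne_zero (mul_ne_zero hPm hPk) hA) hB) hC2
  have e1 : w * (1 - x * x * q) / ((Pm * (1 - z)) * (Pk * (1 - x * x * z * q))) =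
      w * (1 - x * x * q) * (1 - x * z) ^ 2 / D := by
    rw [div_eq_div_iff (mul_ne_zero (mul_ne_zero hPm hA) (mul_ne_zero hPk hB)) hD, hDdef]
    ring
  have e2 : w * (1 - x * x * q) / (Pm * Pk) / (1 - x * z) ^ 2 =
      w * (1 - x * x * q) * ((1 - z) * (1 - x * x * z * q)) / D := by
    rw [div_div, div_eq_div_iff (mul_ne_zero (mul_ne_zero hPm hPk) hC2) hD, hDdef]
    ring
  have e3 : -(w * (x * x * z) * (1 - x * q) ^ 2) /
      (Pm * (Pk * (1 - x * x * z * q)) * (1 - x * z) ^ 2) =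
      -(w * (x * x * z) * (1 - x * q) ^ 2) * (1 - z) / D := by
    rw [div_eq_div_iff (mul_ne_zero (mul_ne_zero hPm (mul_ne_zero hPk hB)) hC2) hD, hDdef]
    ring
  have e4 : -(w * z * (1 - x) ^ 2) / ((Pm * (1 - z)) * Pk * (1 - x * z) ^ 2) =
      -(w * z * (1 - x) ^ 2) * (1 - x * x * z * q) / D := by
    rw [div_eq_div_iff (mul_ne_zero (mul_ne_zero (mul_ne_zero hPm hA) hPk) hC2) hD, hDdef]
    ring
  rw [e1, e2, e3, e4, div_sub_div_same, ← add_div]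
  congr 1
  ring

set_option maxHeartbeats 1000000 in
/-- The Bailey pair `α_l = q^{l²}(1-q^{2l+1})/(1-q)`, `β_k = 1/(q;q)_k²` relative to `x = q`. -/
theorem stmt16 (k : ℕ) :
    ∑ l ∈ Finset.range (k + 1),
        qq ^ (l ^ 2) * (1 - qq ^ (2 * l + 1)) / (poch qq (k - l) * poch qq (k + l + 1)) =
      1 / poch qq k ^ 2 := by
  induction k with
  | zero =>
    have h0 : (1 : F) - qq ≠ 0 := by simpa using one_sub_qq_pow_ne_zero 0
    simp [Finset.sum_range_one, poch, div_self h0]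
  | succ k ih =>
    set C : F := 1 - qq ^ (k + 1) with hC
    have hCne : C ≠ 0 := one_sub_qq_pow_ne_zero k
    -- telescoping certificate
    set g : ℕ → F := fun l =>
      -(qq ^ (l * (l - 1) + k + 1) * (1 - qq ^ l) ^ 2) /
        (poch qq (k + 1 - l) * poch qq (k + l + 1) * C ^ 2) with hg
    have hkey : ∀ l ∈ Finset.range (k + 1),
        qq ^ (l ^ 2) * (1 - qq ^ (2 * l + 1)) /
            (poch qq (k + 1 - l) * poch qq (k + 1 + l + 1)) =
          qq ^ (l ^ 2) * (1 - qq ^ (2 * l + 1)) /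
              (poch qq (k - l) * poch qq (k + l + 1)) / C ^ 2 +
            (g (l + 1) - g l) := by
      intro l hl
      obtain ⟨m, rfl⟩ := Nat.exists_eq_add_of_le (Nat.lt_succ_iff.mp (Finset.mem_range.mp hl))
      simp only [hg, hC]
      have i1 : l + m + 1 - l = m + 1 := by omega
      have i2 : l + m + 1 + l + 1 = (l + m + l + 1) + 1 := by omega
      have i3 : l + m - l = m := by omega
      have i4 : l + m + 1 - (l + 1) = m := by omega
      have i5 : l + m + (l + 1) + 1 = (l + m + l + 1) + 1 := by omega
      rw [i1, i2, i3, i4, i5, poch_succ m, poch_succ (l + m + l + 1)]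
      have e1 : qq ^ (2 * l + 1) = qq ^ l * qq ^ l * qq := by
        rw [show 2 * l + 1 = l + l + 1 by ring, pow_add, pow_add, pow_one]
      have e2 : qq ^ (l + m + 1) = qq ^ l * qq ^ (m + 1) := by
        rw [show l + m + 1 = l + (m + 1) by ring, pow_add]
      have e3 : qq ^ (l + m + l + 1 + 1) = qq ^ l * qq ^ l * qq ^ (m + 1) * qq := by
        rw [show l + m + l + 1 + 1 = l + l + (m + 1) + 1 by ring, pow_add, pow_add, pow_add,
          pow_one]
      have e4 : qq ^ ((l + 1) * (l + 1 - 1) + (l + m) + 1) =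
          qq ^ (l ^ 2) * (qq ^ l * qq ^ l * qq ^ (m + 1)) := by
        rw [show (l + 1) * (l + 1 - 1) + (l + m) + 1 = l ^ 2 + (l + l + (m + 1)) by
          simp only [Nat.add_sub_cancel]; ring, pow_add, pow_add, pow_add]
      have e5 : qq ^ (l * (l - 1) + (l + m) + 1) = qq ^ (l ^ 2) * qq ^ (m + 1) := by
        rw [show l * (l - 1) + (l + m) + 1 = l ^ 2 + (m + 1) by
            cases l with
            | zero => simp
            | succ n => simp only [Nat.add_sub_cancel]; ring,
          pow_add]
      have e6 : qq ^ (l + 1) = qq ^ l * qq := by rw [pow_succ]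
      rw [e1, e2, e3, e4, e5, e6]
      have hPm := poch_ne_zero m
      have hPk := poch_ne_zero (l + m + l + 1)
      have hA : (1 : F) - qq ^ (m + 1) ≠ 0 := one_sub_qq_pow_ne_zero m
      have hB : (1 : F) - qq ^ l * qq ^ l * qq ^ (m + 1) * qq ≠ 0 := by
        rw [← e3]; exact one_sub_qq_pow_ne_zero (l + m + l + 1)
      have hCn : (1 : F) - qq ^ l * qq ^ (m + 1) ≠ 0 := by
        rw [← e2]; exact one_sub_qq_pow_ne_zero (l + m)
      linear_combination cert qq (qq ^ l) (qq ^ (m + 1)) (qq ^ (l ^ 2))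
        (poch qq m) (poch qq (l + m + l + 1)) hPm hPk hA hB hCn
    rw [Finset.sum_range_succ, Finset.sum_congr rfl hkey, Finset.sum_add_distrib,
      ← Finset.sum_div, ih, Finset.sum_range_sub g]
    have hg0 : g 0 = 0 := by simp [hg]
    have htop : g (k + 1) +
        qq ^ ((k + 1) ^ 2) * (1 - qq ^ (2 * (k + 1) + 1)) /
          (poch qq (k + 1 - (k + 1)) * poch qq (k + 1 + (k + 1) + 1)) = 0 := by
      simp only [hg, Nat.sub_self]
      have i1 : k + 1 + (k + 1) + 1 = (2 * k + 2) + 1 := by omega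
      have i2 : k + (k + 1) + 1 = 2 * k + 2 := by omega
      rw [i1, i2, poch_succ (2 * k + 2)]
      have e1 : (k + 1) * (k + 1 - 1) + k + 1 = (k + 1) ^ 2 := by
        simp only [Nat.add_sub_cancel]; ring
      have e2 : 2 * (k + 1) + 1 = (2 * k + 2) + 1 := by ring
      rw [e1, e2]
      have hP0 : poch qq 0 = 1 := by simp [poch]
      rw [hP0]
      have hP := poch_ne_zero (2 * k + 2)
      have hB : (1 : F) - qq ^ (2 * k + 2 + 1) ≠ 0 := one_sub_qq_pow_ne_zero (2 * k + 2)
      field_simp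
      rw [hC]
      ring
    rw [hg0, sub_zero]
    have hfin : poch qq (k + 1) = poch qq k * C := poch_succ k
    rw [hfin]
    have hPk := poch_ne_zero k
    have heq : qq ^ ((k + 1) ^ 2) * (1 - qq ^ (2 * (k + 1) + 1)) /
        (poch qq (k + 1 - (k + 1)) * poch qq (k + 1 + (k + 1) + 1)) = -(g (k + 1)) :=
      eq_neg_of_add_eq_zero_right htop
    rw [heq, add_neg_cancel_right]
    field_simp
end
end
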